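/- Let X be a finite set and S a nilpotent subsemigroup of T(X) whose zero e is a constant map. Then there exists a partition A_0, A_1, ..., A_k of X such that A_0 = im(e) and, for each j ∈ {1,...,k}, A_j is the set of all x ∈ X \ (A_0 ∪ ... ∪ A_{j-1}) satisfying xβ ∈ A_0 ∪ ... ∪ A_{j-1} for all β ∈ S. -/

import Mathlib

/-- `S` is a subsemigroup of the full transformation semigroup on `X`
(maps act on the right, so the product `β·γ` is `γ ∘ β`). -/
def IsTransSub {X : Type*} (S : Set (X → X)) : Prop :=
  ∀ β ∈ S, ∀ γ ∈ S, (γ ∘ β) ∈ S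

/-- `e` is a zero element of `S`: `βe = eβ = e` for all `β ∈ S`. -/
def IsZeroElem {X : Type*} (S : Set (X → X)) (e : X → X) : Prop :=
  e ∈ S ∧ ∀ β ∈ S, e ∘ β = e ∧ β ∘ e = e

/-- `S` is nilpotent with zero `e`: some `m ≥ 1` such that every product of
`m` elements of `S` equals `e`. -/
def IsNilpotentSub {X : Type*} (S : Set (X → X)) (e : X → X) : Prop :=
  ∃ m : ℕ, 0 < m ∧ ∀ L : List (X → X), L.length = m → (∀ f ∈ L, f ∈ S) →
    L.foldr (· ∘ ·) id = e

/-- `S` is commutative. -/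
def IsCommSub {X : Type*} (S : Set (X → X)) : Prop :=
  ∀ β ∈ S, ∀ γ ∈ S, β ∘ γ = γ ∘ β

/-- `S` is a null semigroup with zero `e`: every product of two elements is `e`. -/
def IsNullSub {X : Type*} (S : Set (X → X)) (e : X → X) : Prop :=
  ∀ β ∈ S, ∀ γ ∈ S, γ ∘ β = e

/-- `ξ(n) = max { t ^ (n - t) : 1 ≤ t ≤ n }`. -/
def xi (n : ℕ) : ℕ := (Finset.Icc 1 n).sup (fun t => t ^ (n - t))

/-- `α(n) = max { t ∈ {1,…,n} : t ^ (n - t) = ξ(n) }`. -/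
def alphaMax (n : ℕ) : ℕ :=
  ((Finset.Icc 1 n).filter (fun t => t ^ (n - t) = xi n)).sup id

lemma foldr_comp_apply {X : Type*} (L : List (X → X)) (g : X → X) (x : X) :
    L.foldr (· ∘ ·) g x = L.foldr (· ∘ ·) id (g x) := by
  induction L with
  | nil => rfl
  | cons f L ih => simp [List.foldr_cons, Function.comp_apply, ih]

theorem stmt6 {X : Type*} [Fintype X]
    (S : Set (X → X)) (hS : IsTransSub S)
    (e : X → X) (he : IsZeroElem S e) (hnil : IsNilpotentSub S e)
    (hconst : ∃ c : X, e = Function.const X c) :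
    ∃ (k : ℕ) (A : ℕ → Set X),
      (∀ j ≤ k, (A j).Nonempty) ∧
      (∀ j ≤ k, ∀ l ≤ k, j ≠ l → Disjoint (A j) (A l)) ∧
      (⋃ j ∈ Finset.range (k + 1), A j) = Set.univ ∧
      A 0 = Set.range e ∧
      (∀ j, 1 ≤ j → j ≤ k →
        A j = {x : X | (∀ l < j, x ∉ A l) ∧ ∀ β ∈ S, ∃ l < j, β x ∈ A l}) := by
  classical
  obtain ⟨c, rfl⟩ := hconst
  obtain ⟨m, hm, hM⟩ := hnil
  have hc : ∀ β ∈ S, β c = c := by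
    intro β hβ
    have h := congrFun (he.2 β hβ).2 c
    simpa [Function.const] using h
  set P : X → ℕ → Prop := fun x n => ∀ L : List (X → X), L.length = n →
      (∀ f ∈ L, f ∈ S) → L.foldr (· ∘ ·) id x = c with hPdef
  have hex : ∀ x, ∃ n, P x n := by
    intro x
    exact ⟨m, fun L hL hLS => by rw [hM L hL hLS]; rfl⟩
  set r : X → ℕ := fun x => Nat.find (hex x) with hrdef
  have hr_spec : ∀ x, P x (r x) := fun x => Nat.find_spec (hex x)
  have hr_min : ∀ x n, P x n → r x ≤ n := fun x n h => Nat.find_le h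
  have hmono : ∀ x n, P x n → P x (n + 1) := by
    intro x n h L hL hLS
    match L with
    | [] => simp at hL
    | f :: L' =>
      have hL' : L'.length = n := by simpa using hL
      have h1 : L'.foldr (· ∘ ·) id x = c := h L' hL' (fun g hg => hLS g (List.mem_cons_of_mem _ hg))
      simp only [List.foldr_cons, Function.comp_apply, h1]
      exact hc f (hLS f List.mem_cons_self)
  have hle : ∀ x n, r x ≤ n ↔ P x n := by
    intro x n
    constructor
    · intro h
      have key : ∀ d, P x (r x + d) := by
        intro d
        induction d with
        | zero => exact hr_spec x
        | succ d ih => exact hmono x _ ih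
      have := key (n - r x)
      rwa [Nat.add_sub_cancel' h] at this
    · exact hr_min x n
  have hstep : ∀ x j, P x (j + 1) ↔ ∀ β ∈ S, P (β x) j := by
    intro x j
    constructor
    · intro h β hβ L hL hLS
      have hlen : (L ++ [β]).length = j + 1 := by simp [hL]
      have hmem : ∀ f ∈ L ++ [β], f ∈ S := by
        intro f hf
        rcases List.mem_append.1 hf with hf | hf
        · exact hLS f hf
        · simp at hf; subst hf; exact hβ
      have := h (L ++ [β]) hlen hmem
      rwa [List.foldr_append, foldr_comp_apply] at this
    · intro h L hL hLS
      rcases List.eq_nil_or_concat' L with rfl | ⟨L', β, rfl⟩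
      · simp at hL
      · have hL' : L'.length = j := by simpa using hL
        have hβ : β ∈ S := hLS β (by simp)
        have hLS' : ∀ f ∈ L', f ∈ S := fun f hf => hLS f (by simp [hf])
        rw [List.foldr_append, foldr_comp_apply]
        exact h β hβ L' hL' hLS'
  have hr0 : ∀ x, r x = 0 ↔ x = c := by
    intro x
    constructor
    · intro h
      have := hr_spec x
      rw [h] at this
      simpa using this [] rfl (by simp)
    · rintro rfl
      exact Nat.le_zero.1 (hr_min _ 0 fun L hL _ => by
        rw [List.length_eq_zero_iff.1 hL]; rfl)
  have hdown : ∀ j, (∃ x, r x = j + 1) → ∃ y, r y = j := by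
    rintro j ⟨x, hx⟩
    have hPx : P x (j + 1) := by rw [← hx]; exact hr_spec x
    have hnP : ¬ P x j := by
      intro h
      have := hr_min x j h
      omega
    obtain ⟨L, hL, hLS, hne⟩ : ∃ L : List (X → X), L.length = j ∧ (∀ f ∈ L, f ∈ S) ∧
        L.foldr (· ∘ ·) id x ≠ c := by
      by_contra h
      push_neg at h
      exact hnP fun L hL hLS => h L hL hLS
    match j, hL with
    | 0, hL => exact ⟨c, (hr0 c).2 rfl⟩
    | (j' + 1), hL =>
      rcases List.eq_nil_or_concat' L with rfl | ⟨L', β, rfl⟩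
      · simp at hL
      · have hL' : L'.length = j' := by simpa using hL
        have hβ : β ∈ S := hLS β (by simp)
        refine ⟨β x, ?_⟩
        have h1 : P (β x) (j' + 1) := (hstep x (j' + 1)).1 hPx β hβ
        have h2 : ¬ P (β x) j' := by
          intro h
          apply hne
          rw [List.foldr_append, foldr_comp_apply]
          exact h L' hL' (fun f hf => hLS f (by simp [hf]))
        have h3 := hr_min (β x) _ h1
        have h4 : ¬ r (β x) ≤ j' := fun h => h2 ((hle _ _).1 h)
        omega
  obtain ⟨x₀, -, hx₀⟩ := Finset.exists_max_image (Finset.univ : Finset X) r ⟨c, Finset.mem_univ c⟩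
  set k := r x₀ with hk
  have hbound : ∀ x, r x ≤ k := fun x => hx₀ x (Finset.mem_univ x)
  have hsurj : ∀ j ≤ k, ∃ x, r x = j := by
    have key : ∀ d, ∃ x, r x = k - d := by
      intro d
      induction d with
      | zero => exact ⟨x₀, rfl⟩
      | succ d ih =>
        rcases Nat.eq_zero_or_pos (k - d) with h0 | hpos
        · have : k - (d + 1) = 0 := by omega
          rw [this]
          exact ⟨c, (hr0 c).2 rfl⟩
        · have : k - d = (k - (d + 1)) + 1 := by omega
          rw [this] at ih
          exact hdown _ ih
    intro j hj
    have := key (k - j)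
    rwa [show k - (k - j) = j by omega] at this
  refine ⟨k, fun j => {x | r x = j}, ?_, ?_, ?_, ?_, ?_⟩
  · exact fun j hj => hsurj j hj
  · intro j _ l _ hjl
    rw [Set.disjoint_left]
    rintro x (hx : r x = j) (hx' : r x = l)
    exact hjl (hx ▸ hx')
  · ext x
    simp only [Set.mem_iUnion, Set.mem_univ, iff_true, Finset.mem_range, Set.mem_setOf_eq]
    exact ⟨r x, by have := hbound x; omega, rfl⟩
  · ext x
    constructor
    · rintro (hx : r x = 0)
      rw [hr0] at hx
      exact ⟨c, by simp [hx]⟩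
    · rintro ⟨y, rfl⟩
      show r (Function.const X c y) = 0
      rw [hr0]
      rfl
  · intro j hj1 hjk
    obtain ⟨j', rfl⟩ : ∃ j', j = j' + 1 := ⟨j - 1, by omega⟩
    ext x
    simp only [Set.mem_setOf_eq]
    constructor
    · intro hx
      refine ⟨fun l hl hxl => by omega, fun β hβ => ?_⟩
      have hPx : P x (j' + 1) := (hle x _).1 (le_of_eq hx)
      have h1 : P (β x) j' := (hstep x j').1 hPx β hβ
      have h2 := hr_min _ _ h1
      exact ⟨r (β x), by omega, rfl⟩
    · rintro ⟨h1, h2⟩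
      have hge : j' + 1 ≤ r x := by
        by_contra h
        exact h1 (r x) (by omega) rfl
      have hPx : P x (j' + 1) := by
        rw [hstep]
        intro β hβ
        obtain ⟨l, hl, hrl⟩ := h2 β hβ
        exact (hle _ _).1 (by omega)
      have := hr_min x _ hPx
      omega
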